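/- An extensional K-model D is hyperimmune if and only if for every sequence (α_n) in D and every recursive (computable) g : ℕ → ℕ, it is not the case that for all n, unfolding α_n = a_{n,1} → ⋯ → a_{n,g(n)} → α_n' we have α_{n+1} ∈ ⋃_{k ≤ g(n)} a_{n,k}. Prove: the completion of an extensional partial K-model E is hyperimmune if and only if E is hyperimmune. -/

import Mathlib

/-- A finite antichain of a poset `D`. -/
def FinAntichain (D : Type*) [PartialOrder D] := {a : Finset D // IsAntichain (· ≤ ·) (a : Set D)}

/-- The order `a ≤ b` iff every element of `a` is below some element of `b`. -/
instance {D : Type*} [PartialOrder D] : Preorder (FinAntichain D) where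
  le a b := ∀ α ∈ a.1, ∃ β ∈ b.1, α ≤ β
  le_refl a := fun α h => ⟨α, h, le_refl α⟩
  le_trans a b c hab hbc := fun α hα => by
    obtain ⟨β, hβ, h1⟩ := hab α hα
    obtain ⟨γ, hγ, h2⟩ := hbc β hβ
    exact ⟨γ, hγ, h1.trans h2⟩

/-- An extensional (possibly partial) K-model structure on a poset `D`: a partial map `j`
defined on `dom ⊆ (A_f(D)ᵒᵖ × D)` which is an order isomorphism from `dom` onto `D`
(recall `(a, α) ≤ (b, β)` in `A_f(D)ᵒᵖ × D` iff `b ≤ a` and `α ≤ β`). -/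
structure PartialKModel (D : Type*) [PartialOrder D] where
  dom : Set (FinAntichain D × D)
  j : FinAntichain D × D → D
  injOn : Set.InjOn j dom
  surj : ∀ α : D, ∃ p ∈ dom, j p = α
  le_iff : ∀ p ∈ dom, ∀ q ∈ dom, (j p ≤ j q ↔ (q.1 ≤ p.1 ∧ p.2 ≤ q.2))

/-- `Unfolds M α l α'` : `α = a₁ → ⋯ → aₘ → α'` where `l = [a₁, …, aₘ]`, unfolding through the
(partial) isomorphism `j`. -/
inductive PartialKModel.Unfolds {D : Type*} [PartialOrder D] (M : PartialKModel D) :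
    D → List (FinAntichain D) → D → Prop
  | nil (α : D) : PartialKModel.Unfolds M α [] α
  | cons {a : FinAntichain D} {β α' : D} {l : List (FinAntichain D)} :
      (a, β) ∈ M.dom → PartialKModel.Unfolds M β l α' →
      PartialKModel.Unfolds M (M.j (a, β)) (a :: l) α'

/-- `BadWitness M α g` : for every `n`, `α n` unfolds as `a_{n,1} → ⋯ → a_{n,g n} → α'` and
`α (n+1)` belongs to one of the antichains `a_{n,k}`, `k ≤ g n`. -/
def PartialKModel.BadWitness {D : Type*} [PartialOrder D] (M : PartialKModel D)
    (α : ℕ → D) (g : ℕ → ℕ) : Prop :=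
  ∀ n : ℕ, ∃ (l : List (FinAntichain D)) (α' : D),
    l.length = g n ∧ M.Unfolds (α n) l α' ∧ ∃ a ∈ l, α (n + 1) ∈ a.1

/-- Hyperimmunity: no sequence `(α_n)` and recursive `g` satisfy the bad-witness condition. -/
def PartialKModel.Hyperimmune {D : Type*} [PartialOrder D] (M : PartialKModel D) : Prop :=
  ¬ ∃ (α : ℕ → D) (g : ℕ → ℕ), Computable g ∧ M.BadWitness α g

/-- The increasing approximations of a completion: `strata N B 0 = B` and
`strata N B (n+1)` adds all `j(a, β)` with `a` and `β` from `strata N B n`. -/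
def PartialKModel.strata {D : Type*} [PartialOrder D] (N : PartialKModel D) (B : Set D) :
    ℕ → Set D
  | 0 => B
  | n + 1 => N.strata B n ∪
      {x | ∃ (a : FinAntichain D) (β : D),
        ((a.1 : Finset D) : Set D) ⊆ N.strata B n ∧ β ∈ N.strata B n ∧ N.j (a, β) = x}

/-- `IsCompletion M N ι` : the total K-model `N` on `D̄`, together with the order-embedding
`ι : E → D̄`, is the completion of the partial K-model `M` on `E`: `N` is total, `ι` preserves
and reflects the order, `ι` transports `j_M` to `j_N` (the antichain being transported
pointwise), and every element of `D̄` appears in some stratum of the completion over the image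
of `E`. -/
def IsCompletion {E DD : Type*} [PartialOrder E] [PartialOrder DD]
    (M : PartialKModel E) (N : PartialKModel DD) (ι : E → DD) : Prop :=
  N.dom = Set.univ ∧
  (∀ x y : E, ι x ≤ ι y ↔ x ≤ y) ∧
  (∀ p ∈ M.dom, ∃ b : FinAntichain DD,
      ((b.1 : Finset DD) : Set DD) = ι '' ((p.1.1 : Finset E) : Set E) ∧
      N.j (b, ι p.2) = ι (M.j p)) ∧
  (∀ x : DD, ∃ n : ℕ, x ∈ N.strata (Set.range ι) n)

section CompletionAux

variable {E DD : Type*} [PartialOrder E] [PartialOrder DD]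

private lemma forall2_exists {α β : Type*} {r : α → β → Prop} :
    ∀ {l : List α} {l' : List β}, List.Forall₂ r l l' → ∀ b ∈ l', ∃ a ∈ l, r a b := by
  intro l l' h
  induction h with
  | nil => intro b hb; cases hb
  | cons hr _ ih =>
    intro b hb
    rcases List.mem_cons.mp hb with rfl | hb
    · exact ⟨_, List.mem_cons_self, hr⟩
    · obtain ⟨a, ha, hra⟩ := ih b hb
      exact ⟨a, List.mem_cons_of_mem _ ha, hra⟩

private lemma strata_mono (N : PartialKModel DD) (B : Set DD) :
    Monotone (N.strata B) := by
  apply monotone_nat_of_le_succ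
  intro n x hx
  exact Or.inl hx

private lemma push_unfolds (M : PartialKModel E) (N : PartialKModel DD) (ι : E → DD)
    (h3 : ∀ p ∈ M.dom, ∃ b : FinAntichain DD,
      ((b.1 : Finset DD) : Set DD) = ι '' ((p.1.1 : Finset E) : Set E) ∧
      N.j (b, ι p.2) = ι (M.j p)) (hdom : N.dom = Set.univ)
    {β β' : E} {l : List (FinAntichain E)}
    (hu : M.Unfolds β l β') :
    ∃ l' : List (FinAntichain DD), N.Unfolds (ι β) l' (ι β') ∧
      List.Forall₂ (fun (a : FinAntichain E) (b : FinAntichain DD) =>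
        ι '' ((a.1 : Finset E) : Set E) = ((b.1 : Finset DD) : Set DD)) l l' := by
  induction hu with
  | nil => exact ⟨[], .nil _, .nil⟩
  | @cons a γ α' l0 hp _ ih =>
    obtain ⟨l', hl', hf⟩ := ih
    obtain ⟨b, hbset, hbj⟩ := h3 _ hp
    refine ⟨b :: l', ?_, .cons hbset.symm hf⟩
    rw [← hbj]
    exact .cons (by rw [hdom]; trivial) hl'

private lemma pull_unfolds {M : PartialKModel E} {N : PartialKModel DD} {ι : E → DD}
    (h : IsCompletion M N ι)
    {x α' : DD} {l : List (FinAntichain DD)}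
    (hu : N.Unfolds x l α') :
    ∀ y : E, ι y = x → ∃ (l' : List (FinAntichain E)) (β' : E),
      M.Unfolds y l' β' ∧ ι β' = α' ∧
      List.Forall₂ (fun (a : FinAntichain E) (b : FinAntichain DD) =>
        ι '' ((a.1 : Finset E) : Set E) = ((b.1 : Finset DD) : Set DD)) l' l := by
  obtain ⟨h1, h2, h3, h4⟩ := h
  have hinj : Function.Injective N.j := fun p q hpq =>
    N.injOn (h1 ▸ Set.mem_univ p) (h1 ▸ Set.mem_univ q) hpq
  induction hu with
  | nil => intro y hy; exact ⟨[], y, .nil y, hy, .nil⟩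
  | @cons a γ α' l0 hp hu' ih =>
    intro y hy
    obtain ⟨p, hpdom, hpj⟩ := M.surj y
    obtain ⟨b, hbset, hbj⟩ := h3 p hpdom
    have heq : (b, ι p.2) = (a, γ) := hinj (by rw [hbj, hpj, hy])
    have heq1 : b = a := congrArg Prod.fst heq
    have heq2 : ι p.2 = γ := congrArg Prod.snd heq
    obtain ⟨l'', β'', hu'', hβ'', hf⟩ := ih p.2 heq2
    refine ⟨p.1 :: l'', β'', ?_, hβ'', .cons ?_ hf⟩
    · have : M.Unfolds (M.j (p.1, p.2)) (p.1 :: l'') β'' :=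
        .cons hpdom hu''
      rwa [show (p.1, p.2) = p from rfl, hpj] at this
    · rw [← heq1]; exact hbset.symm

private lemma unfolds_strata {M : PartialKModel E} {N : PartialKModel DD} {ι : E → DD}
    (h : IsCompletion M N ι) :
    ∀ n : ℕ, ∀ {x α' : DD} {l : List (FinAntichain DD)},
      x ∈ N.strata (Set.range ι) n → N.Unfolds x l α' →
      ∀ a ∈ l, ∀ z ∈ a.1, z ∈ N.strata (Set.range ι) (n - 1) := by
  have hinj : Function.Injective N.j := fun p q hpq =>
    N.injOn (h.1 ▸ Set.mem_univ p) (h.1 ▸ Set.mem_univ q) hpq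
  intro n
  induction n with
  | zero =>
    intro x α' l hx hu a ha z hz
    obtain ⟨y, hy⟩ := hx
    obtain ⟨l', β', _, _, hf⟩ := pull_unfolds h hu y hy
    obtain ⟨a', _, hra⟩ := forall2_exists hf a ha
    have : z ∈ ((a.1 : Finset DD) : Set DD) := hz
    rw [← hra] at this
    obtain ⟨w, _, hw⟩ := this
    exact ⟨w, hw⟩
  | succ n ih =>
    intro x α' l hx hu a ha z hz
    rcases hx with hx | ⟨a0, β0, ha0, hβ0, hx⟩
    · exact strata_mono N _ (Nat.sub_le n 1) (ih hx hu a ha z hz)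
    · cases hu with
      | nil => cases ha
      | @cons a1 β1 α'' l0 hp hu' =>
        have heq : (a0, β0) = (a1, β1) := hinj hx
        have heq1 : a0 = a1 := congrArg Prod.fst heq
        have heq2 : β0 = β1 := congrArg Prod.snd heq
        rcases List.mem_cons.mp ha with rfl | ha
        · exact ha0 (heq1 ▸ hz)
        · exact strata_mono N _ (Nat.sub_le n 1) (ih (heq2 ▸ hβ0) hu' a ha z hz)

end CompletionAux

/-- the completion of an extensional partial K-model `E` is hyperimmune if and
only if `E` is hyperimmune. -/
theorem completion_hyperimmune_iff {E DD : Type*} [PartialOrder E] [PartialOrder DD]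
    (M : PartialKModel E) (N : PartialKModel DD) (ι : E → DD)
    (h : IsCompletion M N ι) :
    N.Hyperimmune ↔ M.Hyperimmune := by
  have hι : Function.Injective ι := fun x y hxy =>
    le_antisymm ((h.2.1 x y).mp hxy.le) ((h.2.1 y x).mp hxy.ge)
  constructor
  · rintro hN hMc
    apply hN
    obtain ⟨α, g, hg, hbw⟩ := hMc
    refine ⟨fun n => ι (α n), g, hg, fun n => ?_⟩
    obtain ⟨l, α', hlen, hu, a, ha, hmem⟩ := hbw n
    obtain ⟨l', hu', hf⟩ := push_unfolds M N ι h.2.2.1 h.1 hu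
    refine ⟨l', ι α', by rw [← hf.length_eq, hlen], hu', ?_⟩
    obtain ⟨b, hb, hrb⟩ := forall2_exists hf.flip a ha
    refine ⟨b, hb, ?_⟩
    have : ι (α (n + 1)) ∈ ((b.1 : Finset DD) : Set DD) := by
      rw [← hrb]; exact ⟨α (n + 1), hmem, rfl⟩
    exact this
  · rintro hM hNc
    apply hM
    obtain ⟨α, g, hg, hbw⟩ := hNc
    obtain ⟨r, hr⟩ := h.2.2.2 (α 0)
    have step : ∀ n m, α n ∈ N.strata (Set.range ι) m →
        α (n + 1) ∈ N.strata (Set.range ι) (m - 1) := by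
      intro n m hmem
      obtain ⟨l, α', hlen, hu, a, ha, hz⟩ := hbw n
      exact unfolds_strata h m hmem hu a ha _ hz
    have desc : ∀ m n, α n ∈ N.strata (Set.range ι) m →
        α (n + m) ∈ N.strata (Set.range ι) 0 := by
      intro m
      induction m with
      | zero => intro n hmem; exact hmem
      | succ m ih =>
        intro n hmem
        have h1 := ih (n + 1) (step n (m + 1) hmem)
        simpa only [show n + (m + 1) = n + 1 + m by omega] using h1
    have all : ∀ k, ∃ y : E, ι y = α (r + k) := by
      intro k
      induction k with
      | zero =>
        have h0 := desc r 0 hr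
        rw [Nat.zero_add] at h0
        exact h0
      | succ k ih =>
        obtain ⟨y, hy⟩ := ih
        exact step (r + k) 0 ⟨y, hy⟩
    choose β hβ using all
    refine ⟨β, fun k => g (r + k), hg.comp ?_, fun k => ?_⟩
    · exact (Primrec.nat_add.comp (Primrec.const r) Primrec.id).to_comp
    · obtain ⟨l, α', hlen, hu, a, ha, hz⟩ := hbw (r + k)
      obtain ⟨l', β', hu', hβ', hf⟩ := pull_unfolds h hu (β k) (hβ k)
      refine ⟨l', β', by rw [hf.length_eq, hlen], hu', ?_⟩
      obtain ⟨a', ha', hra⟩ := forall2_exists hf a ha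
      refine ⟨a', ha', ?_⟩
      have hmem : ι (β (k + 1)) ∈ ι '' ((a'.1 : Finset E) : Set E) := by
        rw [hra]
        have : ι (β (k + 1)) = α (r + k + 1) := hβ (k + 1)
        rw [this]
        exact hz
      obtain ⟨w, hw, hww⟩ := hmem
      have hwe : w = β (k + 1) := hι hww
      exact Finset.mem_coe.mp (hwe ▸ hw)
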